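/- Let N be a monotone Boolean automata network of size n with no non-sequentialisable transitions of size smaller than n, and let x ⇒ y = x̄^V be a non-sequentialisable transition such that y is stable (U(y) = ∅). Then y has empty asynchronous basin: no configuration z ≠ y satisfies z ⇝ y asynchronously. Moreover every automaton i ∈ V carries a positive loop (i,i) with sign +1 in the interaction graph. -/

import Mathlib

namespace BAN

/-- A configuration of a Boolean automata network of size `n`. -/
abbrev Config (n : ℕ) := Fin n → Bool

/-- `s(b) = 2b - 1 ∈ {-1,1}`. -/
def sgn (b : Bool) : ℤ := if b then 1 else -1

/-- Boolean as integer `0/1`. -/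
def bint (b : Bool) : ℤ := if b then 1 else 0

/-- `x̄^i` : `x` with coordinate `i` flipped. -/
def flip {n : ℕ} (x : Config n) (i : Fin n) : Config n := Function.update x i (!x i)

/-- A Boolean automata network of size `n`: the family of local transition functions. -/
def Net (n : ℕ) := Fin n → Config n → Bool

/-- `f i` is positively (locally) monotone in coordinate `j`:
`s(x_j)·(f_i(x) − f_i(x̄^j)) ≥ 0` for all `x`. -/
def posIn {n : ℕ} (f : Net n) (i j : Fin n) : Prop :=
  ∀ x : Config n, 0 ≤ sgn (x j) * (bint (f i x) - bint (f i (flip x j)))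

/-- `f i` is negatively (locally) monotone in coordinate `j`. -/
def negIu {n : ℕ} (f : Net n) (i j : Fin n) : Prop :=
  ∀ x : Config n, sgn (x j) * (bint (f i x) - bint (f i (flip x j))) ≤ 0

/-- The network is (locally) monotone. -/
def MonotoneNet {n : ℕ} (f : Net n) : Prop := ∀ i j, posIn f i j ∨ negIu f i j

/-- `(j,i)` is an arc of the interaction graph: `f i` depends on coordinate `j`. -/
def arc {n : ℕ} (f : Net n) (j i : Fin n) : Prop := ∃ x, f i x ≠ f i (flip x j)

/-- The arc `(j,i)` exists and has sign `s` (`+1` or `-1`). -/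
def hasSign {n : ℕ} (f : Net n) (j i : Fin n) (s : ℤ) : Prop :=
  arc f j i ∧ ((s = 1 ∧ posIn f i j) ∨ (s = -1 ∧ negIu f i j))

/-- Automaton `i` is unstable in `x`. -/
def unstable {n : ℕ} (f : Net n) (x : Config n) (i : Fin n) : Prop := f i x ≠ x i

/-- The arc `(j,i)` is frustrated in configuration `x`: `s(x_j)·s(x_i) = − sign(j,i)`. -/
def frustrated {n : ℕ} (f : Net n) (x : Config n) (j i : Fin n) : Prop :=
  ∃ s : ℤ, hasSign f j i s ∧ sgn (x j) * sgn (x i) = -s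

/-- `Δ(x,y)`: the set of coordinates where `x` and `y` differ. -/
def diff {n : ℕ} (x y : Config n) : Finset (Fin n) :=
  Finset.univ.filter fun i => x i ≠ y i

/-- `U(x)`: the set of unstable automata of `x`. -/
def U {n : ℕ} (f : Net n) (x : Config n) : Finset (Fin n) :=
  Finset.univ.filter fun i => f i x ≠ x i

/-- Elementary transition `x → y`: `∅ ≠ Δ(x,y) ⊆ U(x)`. -/
def elemTrans {n : ℕ} (f : Net n) (x y : Config n) : Prop :=
  (diff x y).Nonempty ∧ diff x y ⊆ U f x

/-- Asynchronous (atomic) transition: flip one unstable coordinate. -/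
def asyncStep {n : ℕ} (f : Net n) (x y : Config n) : Prop :=
  ∃ i, unstable f x i ∧ y = flip x i

/-- Asynchronous reachability (derivations). -/
def asyncReach {n : ℕ} (f : Net n) : Config n → Config n → Prop :=
  Relation.ReflTransGen (asyncStep f)

/-- `x ⇒ y` is sequentialisable: there is a chain of strictly smaller elementary
transitions from `x` to `y`. -/
def seqable {n : ℕ} (f : Net n) (x y : Config n) : Prop :=
  ∃ l : List (Config n),
    l.Chain' (fun u v => elemTrans f u v ∧ (diff u v).card < (diff x y).card) ∧
    l.head? = some x ∧ l.getLast? = some y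

/-- Non-sequentialisable (normal) synchronous transition. -/
def nonSeq {n : ℕ} (f : Net n) (x y : Config n) : Prop :=
  elemTrans f x y ∧ 2 ≤ (diff x y).card ∧ ¬ seqable f x y

/-- Cyclic successor on `Fin ℓ`. -/
def cnext {ℓ : ℕ} (k : Fin ℓ) : Fin ℓ := ⟨(k.val + 1) % ℓ, Nat.mod_lt _ k.pos⟩

/-- `c : Fin ℓ → Fin n` describes a cycle of the interaction graph of `f`
(a closed walk with pairwise distinct arcs). -/
def isCycle {n : ℕ} (f : Net n) {ℓ : ℕ} (c : Fin ℓ → Fin n) : Prop :=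
  0 < ℓ ∧ (∀ k, arc f (c k) (c (cnext k))) ∧
    Function.Injective (fun k => (c k, c (cnext k)))

/-- The cycle `c` is `x`-critical: all nodes unstable in `x`, all arcs frustrated in `x`. -/
def xCriticalCycle {n : ℕ} (f : Net n) (x : Config n) {ℓ : ℕ} (c : Fin ℓ → Fin n) : Prop :=
  isCycle f c ∧ (∀ k, unstable f x (c k)) ∧ ∀ k, frustrated f x (c k) (c (cnext k))

/-- `x̄^S`: flip all coordinates of `x` in `S`. -/
def flipSet {n : ℕ} (x : Config n) (S : Finset (Fin n)) : Config n :=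
  fun i => if i ∈ S then !x i else x i

/-- `x̄^V`. -/
def flipAll {n : ℕ} (x : Config n) : Config n := fun i => !x i

/-- Union of the first `t` blocks of a list of finsets. -/
def prefUnion {n : ℕ} (D : List (Finset (Fin n))) (t : ℕ) : Finset (Fin n) :=
  (D.take t).foldr (· ∪ ·) ∅

/-- `x ⇒ y` is totally sequentialisable: some ordering of `Δ(x,y)` gives a chain of
asynchronous transitions from `x` to `y`. -/
def totallySeq {n : ℕ} (f : Net n) (x y : Config n) : Prop :=
  ∃ l : List (Fin n), l.Nodup ∧ l.toFinset = diff x y ∧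
    ∀ t : Fin l.length, unstable f ((l.take t.val).foldl flip x) (l.get t)

/-- Attractor of the asynchronous transition graph: nonempty, closed, strongly
connected set of configurations (terminal SCC). -/
def isAttractor {n : ℕ} (f : Net n) (A : Set (Config n)) : Prop :=
  A.Nonempty ∧ (∀ a ∈ A, ∀ b, asyncStep f a b → b ∈ A) ∧
    ∀ a ∈ A, ∀ b ∈ A, asyncReach f a b

/-- A configuration is transient if it belongs to no attractor. -/
def transientCfg {n : ℕ} (f : Net n) (z : Config n) : Prop :=
  ¬ ∃ A : Set (Config n), isAttractor f A ∧ z ∈ A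

lemma flip_flip {n : ℕ} (u : Config n) (i : Fin n) : flip (flip u i) i = u := by
  funext j
  by_cases h : j = i
  · subst h; simp [flip]
  · simp [flip, Function.update_of_ne h]

lemma diff_flip_self {n : ℕ} (u : Config n) (i : Fin n) : diff u (flip u i) = {i} := by
  ext j
  by_cases h : j = i
  · subst h; rw [diff, Finset.mem_filter]; simp [flip]
  · rw [diff, Finset.mem_filter]; simp [flip, Function.update_of_ne h, h]

lemma eq_flip_of_diff_singleton {n : ℕ} {u v : Config n} {i : Fin n}
    (h : diff u v = {i}) : v = flip u i := by
  funext j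
  have hj : j ∈ diff u v ↔ j = i := by rw [h]; simp
  by_cases hji : j = i
  · subst hji
    have : u j ≠ v j := by
      have := hj.mpr rfl; simpa [diff] using this
    simp only [flip, Function.update_self]
    cases hu : u j <;> cases hv : v j <;> simp_all
  · have : ¬ u j ≠ v j := by
      intro hne
      exact hji (hj.mp (by simpa [diff] using hne))
    simp only [flip, Function.update_of_ne hji]
    tauto

lemma asyncStep_elem {n : ℕ} (f : Net n) {u v : Config n} (h : asyncStep f u v) :
    elemTrans f u v ∧ (diff u v).card = 1 := by
  obtain ⟨i, hi, rfl⟩ := h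
  unfold elemTrans
  rw [diff_flip_self]
  refine ⟨⟨Finset.singleton_nonempty i, ?_⟩, Finset.card_singleton i⟩
  intro j hj
  simp only [Finset.mem_singleton] at hj
  subst hj
  simpa [U, unstable] using hi

lemma chain_reach {C : Type*} {r s : C → C → Prop}
    (h : ∀ u v, r u v → Relation.ReflTransGen s u v) :
    ∀ (l : List C) (a b : C), l.Chain' r → l.head? = some a → l.getLast? = some b →
      Relation.ReflTransGen s a b := by
  intro l
  induction l with
  | nil => intro a b _ hh _; simp at hh
  | cons c t ih =>
    intro a b hc hh hl
    simp only [List.head?_cons, Option.some.injEq] at hh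
    subst hh
    cases t with
    | nil =>
      simp only [List.getLast?_singleton, Option.some.injEq] at hl
      subst hl; exact Relation.ReflTransGen.refl
    | cons d t' =>
      rw [List.Chain', List.isChain_cons_cons] at hc
      exact (h _ _ hc.1).trans
        (ih d b hc.2 rfl (by rwa [List.getLast?_cons_cons] at hl))

lemma reach_chain {n : ℕ} (f : Net n) {a b : Config n} (h : asyncReach f a b) :
    ∃ l : List (Config n), l.Chain' (asyncStep f) ∧
      l.head? = some a ∧ l.getLast? = some b := by
  induction h with
  | refl => exact ⟨[a], List.IsChain.singleton a, by simp, by simp⟩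
  | tail _ hstep ih =>
    rename_i c d _
    obtain ⟨l, hc, hh, hl⟩ := ih
    refine ⟨l ++ [d], ?_, ?_, by simp⟩
    · rw [List.Chain', List.isChain_append]
      refine ⟨hc, by simp, ?_⟩
      intro u hu v hv
      simp only [List.head?_cons, Option.mem_def, Option.some.injEq] at hv
      rw [Option.mem_def, hl] at hu
      subst hv; cases hu; exact hstep
    · cases l with
      | nil => simp at hh
      | cons e t => simpa using hh

lemma elem_to_reach {n : ℕ} (f : Net n)
    (hsize : ∀ u v, nonSeq f u v → n ≤ (diff u v).card) :
    ∀ m (u v : Config n), (diff u v).card ≤ m → elemTrans f u v →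
      (diff u v).card < n → asyncReach f u v := by
  intro m
  induction m with
  | zero =>
    intro u v hm he _
    exact absurd (Finset.card_pos.mpr he.1) (by omega)
  | succ m ih =>
    intro u v hm he hn
    by_cases h1 : (diff u v).card = 1
    · obtain ⟨i, hi⟩ := Finset.card_eq_one.mp h1
      have hv : v = flip u i := eq_flip_of_diff_singleton hi
      have hiu : i ∈ U f u := he.2 (hi ▸ Finset.mem_singleton_self i)
      refine Relation.ReflTransGen.single ⟨i, ?_, hv⟩
      simpa [U, unstable] using hiu
    · have h2 : 2 ≤ (diff u v).card := by
        have := Finset.card_pos.mpr he.1; omega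
      have hnseq : ¬ nonSeq f u v := fun hns => absurd (hsize u v hns) (by omega)
      have hseq : seqable f u v := by
        by_contra hc; exact hnseq ⟨he, h2, hc⟩
      obtain ⟨l, hch, hh, hl⟩ := hseq
      refine chain_reach (r := fun a b => elemTrans f a b ∧ (diff a b).card < (diff u v).card)
        ?_ l u v hch hh hl
      intro a b ⟨hab, hcard⟩
      exact ih a b (by omega) hab (by omega)

/-- if `N` has no non-sequentialisable transition of size `< n`,
`x ⇒ y = x̄^V` is non-sequentialisable and `y` is stable, then `y` has empty
asynchronous basin and every automaton bears a positive loop. -/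
theorem stmt12 {n : ℕ} (f : Net n) (hmono : MonotoneNet f)
    (hsize : ∀ u v, nonSeq f u v → n ≤ (diff u v).card)
    (x y : Config n) (hy : y = flipAll x) (hns : nonSeq f x y)
    (hstable : ∀ i, f i y = y i) :
    (∀ z : Config n, z ≠ y → ¬ asyncReach f z y) ∧
    (∀ i : Fin n, arc f i i ∧ posIn f i i) := by
  have hdiff : diff x y = Finset.univ := by
    ext i; simp [diff, hy, flipAll]
  have hcard : (diff x y).card = n := by rw [hdiff]; simp
  have hn2 : 2 ≤ n := hcard ▸ hns.2.1
  have hU : U f x = Finset.univ :=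
    Finset.univ_subset_iff.mp (hdiff ▸ hns.1.2)
  -- key claim: every i is stable in ȳ^i
  have key : ∀ i : Fin n, f i (flip y i) = flip y i i := by
    intro i
    by_contra hk
    -- then ȳ^i → y is an async step
    have hstep : asyncStep f (flip y i) y := by
      refine ⟨i, hk, ?_⟩
      rw [flip_flip]
    -- x ⇝ ȳ^i since diff has card n-1 < n
    have hdxy : diff x (flip y i) = Finset.univ \ {i} := by
      ext j
      by_cases hji : j = i
      · subst hji; simp [diff, flip, hy, flipAll]
      · simp [diff, flip, Function.update_of_ne hji, hy, flipAll, hji]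
    have hcard' : (diff x (flip y i)).card = n - 1 := by
      rw [hdxy, Finset.card_sdiff_of_subset (by simp)]; simp
    have helem : elemTrans f x (flip y i) := by
      constructor
      · rw [← Finset.card_pos, hcard']; omega
      · rw [hU]; exact Finset.subset_univ _
    have hreach : asyncReach f x (flip y i) :=
      elem_to_reach f hsize (n - 1) x (flip y i) (by omega) helem (by omega)
    have hreachy : asyncReach f x y := hreach.tail hstep
    -- this would sequentialise x ⇒ y
    obtain ⟨l, hch, hh, hl⟩ := reach_chain f hreachy
    refine hns.2.2 ⟨l, ?_, hh, hl⟩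
    refine List.IsChain.imp ?_ hch
    intro a b hab
    obtain ⟨he, hc1⟩ := asyncStep_elem f hab
    exact ⟨he, by omega⟩
  constructor
  · -- empty basin
    intro z hz hr
    rcases hr.cases_tail with h | ⟨c, _, hstep⟩
    · exact hz h.symm
    · obtain ⟨i, hi, hyc⟩ := hstep
      have hc : c = flip y i := by rw [hyc, flip_flip]
      rw [hc] at hi
      exact hi (key i)
  · -- positive loops
    intro i
    have hfy : f i y = y i := hstable i
    have hfly : f i (flip y i) = !y i := by
      rw [key i]; simp [flip]
    have harc : arc f i i := ⟨y, by rw [hfy, hfly]; cases y i <;> simp⟩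
    refine ⟨harc, ?_⟩
    rcases hmono i i with hp | hneg
    · exact hp
    · exfalso
      have := hneg y
      rw [hfy, hfly] at this
      cases hyi : y i <;> rw [hyi] at this <;> simp [sgn, bint] at this

end BAN
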